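/- Let ρ = (√5 − 1)/2, let S_1(x) = ρx and S_2(x) = ρx + (1 − ρ), and let μ be a Borel probability measure on ℝ with support contained in [0,1] satisfying μ(A) = (1/2) μ(S_1^{-1}(A)) + (1/2) μ(S_2^{-1}(A)) for every Borel set A ⊆ ℝ. Then ∫_{[0,ρ²]} x² dμ(x) = ρ⁴ (5ρ + 4) / (6(ρ + 8)). -/

import Mathlib

set_option maxHeartbeats 1000000


open MeasureTheory Set

/-- For the infinite Bernoulli convolution `μ` associated with the
golden ratio `ρ = (√5 − 1)/2`, one has `∫_{[0,ρ²]} x² dμ = ρ⁴(5ρ + 4)/(6(ρ + 8))`. -/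
theorem bernoulli_convolution_second_moment
    (ρ : ℝ) (hρ : ρ = (Real.sqrt 5 - 1) / 2)
    (μ : Measure ℝ) [IsProbabilityMeasure μ]
    (hsupp : μ (Set.Icc (0 : ℝ) 1)ᶜ = 0)
    (hself : ∀ A : Set ℝ, MeasurableSet A →
      μ A = (1 / 2) * μ ((fun x => ρ * x) ⁻¹' A) +
            (1 / 2) * μ ((fun x => ρ * x + (1 - ρ)) ⁻¹' A)) :
    (∫ x in Set.Icc 0 (ρ ^ 2), x ^ 2 ∂μ) = ρ ^ 4 * (5 * ρ + 4) / (6 * (ρ + 8)) := by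
  have h5 : Real.sqrt 5 ^ 2 = 5 := Real.sq_sqrt (by norm_num)
  have h5nn : (0:ℝ) ≤ Real.sqrt 5 := Real.sqrt_nonneg 5
  have hρpos : 0 < ρ := by rw [hρ]; nlinarith
  have hρlt : ρ < 1 := by rw [hρ]; nlinarith
  have hρ2 : ρ ^ 2 = 1 - ρ := by rw [hρ]; nlinarith
  have hρne : ρ ≠ 0 := ne_of_gt hρpos
  have hρ2pos : 0 < ρ^2 := by positivity
  have hρ2leρ : ρ^2 ≤ ρ := by nlinarith [hρ2, hρpos, hρlt]
  have hρ2lt1 : ρ^2 < 1 := by nlinarith [hρ2, hρpos]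
  have hm1 : Measurable fun x : ℝ => ρ * x := measurable_id.const_mul ρ
  have hm2 : Measurable fun x : ℝ => ρ * x + (1 - ρ) := hm1.add_const _
  -- measure identity
  have hμeq : μ = (1/2 : ENNReal) • μ.map (fun x => ρ * x)
      + (1/2 : ENNReal) • μ.map (fun x => ρ * x + (1 - ρ)) := by
    refine Measure.ext fun A hA => ?_
    rw [Measure.add_apply, Measure.smul_apply, Measure.smul_apply,
        Measure.map_apply hm1 hA, Measure.map_apply hm2 hA, hself A hA]
    simp [smul_eq_mul]
  have hae : ∀ᵐ x ∂μ, x ∈ Icc (0:ℝ) 1 := by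
    rw [ae_iff]
    simpa [Set.compl_def] using hsupp
  -- integrability helper
  have hint : ∀ (E : Set ℝ) (p : ℝ → ℝ), Measurable p →
      (∀ x ∈ Icc (0:ℝ) 1, |p x| ≤ 1) → IntegrableOn p E μ := by
    intro E p hp hb
    refine (integrable_const (1:ℝ)).mono' hp.aestronglyMeasurable.restrict ?_
    refine ae_restrict_of_ae (hae.mono fun x hx => ?_)
    simpa [Real.norm_eq_abs] using hb x hx
  -- key self-similarity for set integrals
  have key : ∀ (E : Set ℝ) (p : ℝ → ℝ), MeasurableSet E → Measurable p →
      (∀ x ∈ E, |p x| ≤ 1) →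
      ∫ x in E, p x ∂μ
        = 1/2 * (∫ x in (fun x => ρ * x) ⁻¹' E, p (ρ * x) ∂μ)
        + 1/2 * (∫ x in (fun x => ρ * x + (1 - ρ)) ⁻¹' E, p (ρ * x + (1 - ρ)) ∂μ) := by
    intro E p hE hp hbE
    have hf : Measurable (E.indicator p) := hp.indicator hE
    have hbi : ∀ y, ‖E.indicator p y‖ ≤ 1 := by
      intro y
      by_cases hy : y ∈ E
      · rw [Set.indicator_of_mem hy]; simpa [Real.norm_eq_abs] using hbE y hy
      · rw [Set.indicator_of_notMem hy]; norm_num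
    have hint1 : Integrable (E.indicator p) (μ.map (fun x => ρ * x)) := by
      rw [integrable_map_measure hf.aestronglyMeasurable hm1.aemeasurable]
      exact (integrable_const (1:ℝ)).mono' (hf.comp hm1).aestronglyMeasurable
        (ae_of_all _ fun x => hbi _)
    have hint2 : Integrable (E.indicator p) (μ.map (fun x => ρ * x + (1 - ρ))) := by
      rw [integrable_map_measure hf.aestronglyMeasurable hm2.aemeasurable]
      exact (integrable_const (1:ℝ)).mono' (hf.comp hm2).aestronglyMeasurable
        (ae_of_all _ fun x => hbi _)
    have e0 : ∫ x, E.indicator p x ∂μ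
        = 1/2 * ∫ x, E.indicator p (ρ*x) ∂μ
        + 1/2 * ∫ x, E.indicator p (ρ*x+(1-ρ)) ∂μ := by
      conv_lhs => rw [hμeq]
      rw [integral_add_measure (hint1.smul_measure (by norm_num)) (hint2.smul_measure (by norm_num)),
          integral_smul_measure, integral_smul_measure,
          integral_map hm1.aemeasurable hf.aestronglyMeasurable,
          integral_map hm2.aemeasurable hf.aestronglyMeasurable]
      norm_num [smul_eq_mul]
    have r0 : ∫ x, E.indicator p x ∂μ = ∫ x in E, p x ∂μ := integral_indicator hE
    have r1 : ∫ x, E.indicator p (ρ*x) ∂μ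
        = ∫ x in (fun x => ρ * x) ⁻¹' E, p (ρ * x) ∂μ := by
      have h : ∀ x, E.indicator p (ρ*x)
          = ((fun x => ρ * x) ⁻¹' E).indicator (fun y => p (ρ * y)) x :=
        fun x => (Set.indicator_comp_right (fun x => ρ * x) (g := p) (x := x)).symm
      simp_rw [h]
      exact integral_indicator (hm1 hE)
    have r2 : ∫ x, E.indicator p (ρ*x+(1-ρ)) ∂μ
        = ∫ x in (fun x => ρ * x + (1 - ρ)) ⁻¹' E, p (ρ * x + (1 - ρ)) ∂μ := by
      have h : ∀ x, E.indicator p (ρ*x+(1-ρ))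
          = ((fun x => ρ * x + (1 - ρ)) ⁻¹' E).indicator (fun y => p (ρ * y + (1 - ρ))) x :=
        fun x => (Set.indicator_comp_right (fun x => ρ * x + (1 - ρ)) (g := p) (x := x)).symm
      simp_rw [h]
      exact integral_indicator (hm2 hE)
    rw [← r0, ← r1, ← r2]; exact e0
  -- basic null-set tools
  have intnull : ∀ (s : Set ℝ) (f : ℝ → ℝ), μ s = 0 → ∫ x in s, f x ∂μ = 0 := by
    intro s f h
    rw [Measure.restrict_eq_zero.mpr h]
    exact integral_zero_measure f
  have hnull : ∀ s : Set ℝ, (∀ x ∈ s, x < 0 ∨ 1 < x) → μ s = 0 := by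
    intro s h
    refine measure_mono_null (fun x hx => ?_) hsupp
    simp only [mem_compl_iff, mem_Icc, not_and, not_le]
    rcases h x hx with h' | h'
    · intro h0; linarith
    · intro _; exact h'
  have h0 : μ {(0:ℝ)} = 0 := by
    have hnegρ : μ {(-ρ:ℝ)} = 0 :=
      hnull _ (fun x hx => by rw [mem_singleton_iff] at hx; subst hx; left; linarith)
    have e := key {(0:ℝ)} (fun _ => (1:ℝ)) (measurableSet_singleton 0) measurable_const
      (fun x _ => by norm_num)
    have hp1 : (fun x => ρ * x) ⁻¹' {(0:ℝ)} = {(0:ℝ)} := by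
      ext x; simp [mul_eq_zero, hρne]
    have hp2 : (fun x => ρ * x + (1 - ρ)) ⁻¹' {(0:ℝ)} = {(-ρ:ℝ)} := by
      ext x
      simp only [mem_preimage, mem_singleton_iff]
      constructor
      · intro h
        have h' : ρ * x = ρ * (-ρ) := by linear_combination h + hρ2
        exact mul_left_cancel₀ hρne h'
      · intro h; subst h; linear_combination -hρ2
    rw [hp1, hp2, intnull _ _ hnegρ, setIntegral_const] at e
    simp only [smul_eq_mul, mul_one] at e
    have ht : (μ {(0:ℝ)}).toReal = 0 := by rw [measureReal_def] at e; linarith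
    exact ((ENNReal.toReal_eq_zero_iff _).mp ht).resolve_right (measure_ne_top μ _)
  have hIccneg : μ (Icc (-ρ) 0) = 0 := by
    have hsub : Icc (-ρ) 0 ⊆ Ico (-ρ) 0 ∪ {0} := by
      intro x hx
      rcases eq_or_lt_of_le hx.2 with h | h
      · right; simp [h]
      · left; exact ⟨hx.1, h⟩
    refine measure_mono_null hsub (measure_union_null ?_ h0)
    exact hnull _ (fun x hx => Or.inl hx.2)
  -- a.e. set equalities
  have hAeq : (Ioc 0 (ρ^2) : Set ℝ) =ᵐ[μ] Icc 0 (ρ^2) := by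
    refine ae_eq_set.mpr ⟨?_, ?_⟩
    · exact measure_mono_null (fun x hx => (hx.2 (Ioc_subset_Icc_self hx.1)).elim) h0
    · refine measure_mono_null (fun x hx => ?_) h0
      simp only [mem_diff, mem_Icc, mem_Ioc, not_and, not_le] at hx
      have h0x : ¬ (0:ℝ) < x := fun h => absurd hx.1.2 (not_le.mpr (hx.2 h))
      have : x = 0 := le_antisymm (not_lt.mp h0x) hx.1.1
      simp [this]
  have h1le : (1:ℝ) ≤ 1/ρ := by
    rw [le_div_iff₀ hρpos]; linarith
  have hIeq1 : (Icc 0 (1/ρ) : Set ℝ) =ᵐ[μ] Icc 0 1 := by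
    refine ae_eq_set.mpr ⟨?_, ?_⟩
    · refine hnull _ (fun x hx => ?_)
      simp only [mem_diff, mem_Icc, not_and, not_le] at hx
      exact Or.inr (hx.2 hx.1.1)
    · refine measure_mono_null (fun x hx => ((hx.2 ⟨hx.1.1, le_trans hx.1.2 h1le⟩).elim :
        x ∈ (∅ : Set ℝ))) measure_empty
  have hIeq2 : (Icc (-ρ) 1 : Set ℝ) =ᵐ[μ] Icc 0 1 := by
    refine ae_eq_set.mpr ⟨?_, ?_⟩
    · refine hnull _ (fun x hx => ?_)
      simp only [mem_diff, mem_Icc, not_and, not_le] at hx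
      left
      by_contra h
      exact absurd (hx.2 (not_lt.mp h)) (not_lt.mpr hx.1.2)
    · refine measure_mono_null (fun x hx => ((hx.2 ⟨by linarith [hx.1.1], hx.1.2⟩).elim :
        x ∈ (∅ : Set ℝ))) measure_empty
  -- preimage computations
  have hdivρ : ρ^2 / ρ = ρ := by
    rw [sq, mul_div_assoc, div_self hρne, mul_one]
  have pre1A : (fun x => ρ * x) ⁻¹' Icc 0 (ρ^2) = Icc 0 ρ := by
    rw [preimage_const_mul_Icc₀ _ _ hρpos, zero_div, hdivρ]
  have pre2A : (fun x => ρ * x + (1 - ρ)) ⁻¹' Icc 0 (ρ^2) = Icc (-ρ) 0 := by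
    have h : (fun x => ρ * x + (1 - ρ)) ⁻¹' Icc 0 (ρ^2)
        = (fun x => ρ * x) ⁻¹' ((fun y => y + (1 - ρ)) ⁻¹' Icc 0 (ρ^2)) := rfl
    rw [h, preimage_add_const_Icc, preimage_const_mul_Icc₀ _ _ hρpos]
    have e1 : (0 - (1 - ρ)) / ρ = -ρ := by rw [div_eq_iff hρne]; linear_combination hρ2
    have e2 : (ρ^2 - (1 - ρ)) / ρ = 0 := by rw [div_eq_iff hρne]; linear_combination hρ2
    rw [e1, e2]
  have pre1B : (fun x => ρ * x) ⁻¹' Ioc (ρ^2) ρ = Ioc ρ 1 := by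
    rw [preimage_const_mul_Ioc₀ _ _ hρpos, hdivρ, div_self hρne]
  have pre2B : (fun x => ρ * x + (1 - ρ)) ⁻¹' Ioc (ρ^2) ρ = Ioc 0 (ρ^2) := by
    have h : (fun x => ρ * x + (1 - ρ)) ⁻¹' Ioc (ρ^2) ρ
        = (fun x => ρ * x) ⁻¹' ((fun y => y + (1 - ρ)) ⁻¹' Ioc (ρ^2) ρ) := rfl
    rw [h, preimage_add_const_Ioc, preimage_const_mul_Ioc₀ _ _ hρpos]
    have e1 : (ρ^2 - (1 - ρ)) / ρ = 0 := by rw [div_eq_iff hρne]; linear_combination hρ2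
    have e2 : (ρ - (1 - ρ)) / ρ = ρ^2 := by rw [div_eq_iff hρne]; linear_combination (1-ρ)*hρ2
    rw [e1, e2]
  have pre1I : (fun x => ρ * x) ⁻¹' Icc 0 1 = Icc 0 (1/ρ) := by
    rw [preimage_const_mul_Icc₀ _ _ hρpos, zero_div]
  have pre2I : (fun x => ρ * x + (1 - ρ)) ⁻¹' Icc 0 1 = Icc (-ρ) 1 := by
    have h : (fun x => ρ * x + (1 - ρ)) ⁻¹' Icc 0 1
        = (fun x => ρ * x) ⁻¹' ((fun y => y + (1 - ρ)) ⁻¹' Icc 0 1) := rfl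
    rw [h, preimage_add_const_Icc, preimage_const_mul_Icc₀ _ _ hρpos]
    have e1 : (0 - (1 - ρ)) / ρ = -ρ := by rw [div_eq_iff hρne]; linear_combination hρ2
    have e2 : (1 - (1 - ρ)) / ρ = 1 := by rw [div_eq_iff hρne]; ring
    rw [e1, e2]
  -- bounds and subsets
  have bx : ∀ x ∈ Icc (0:ℝ) 1, |x| ≤ 1 := fun x hx => by
    rw [abs_le]; exact ⟨by linarith [hx.1], hx.2⟩
  have bx2 : ∀ x ∈ Icc (0:ℝ) 1, |x^2| ≤ 1 := fun x hx => by
    rw [abs_le]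
    refine ⟨le_trans (by norm_num) (sq_nonneg x), ?_⟩
    calc x^2 = x*x := sq x
      _ ≤ 1*1 := mul_le_mul hx.2 hx.2 hx.1 (by norm_num)
      _ = 1 := by norm_num
  have hAsub : Icc (0:ℝ) (ρ^2) ⊆ Icc (0:ℝ) 1 :=
    Icc_subset_Icc le_rfl hρ2lt1.le
  have hBsub : Ioc (ρ^2) ρ ⊆ Icc (0:ℝ) 1 := fun x hx =>
    ⟨(hρ2pos.trans hx.1).le, hx.2.trans hρlt.le⟩
  have hCsub : Ioc ρ (1:ℝ) ⊆ Icc (0:ℝ) 1 := fun x hx =>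
    ⟨by linarith [hx.1], hx.2⟩
  -- splitting integrals
  have hdisj : ∀ a b c : ℝ, Disjoint (Icc a b) (Ioc b c) := by
    intro a b c
    rw [Set.disjoint_left]
    intro x hx hx'
    exact absurd hx.2 (not_le.mpr hx'.1)
  have hsplit : ∀ (f : ℝ → ℝ), Measurable f → (∀ x ∈ Icc (0:ℝ) 1, |f x| ≤ 1) →
      ∀ s t : Set ℝ, Disjoint s t → MeasurableSet t →
      ∫ x in s ∪ t, f x ∂μ = (∫ x in s, f x ∂μ) + ∫ x in t, f x ∂μ :=
    fun f hf hb s t hd ht => setIntegral_union hd ht (hint s f hf hb) (hint t f hf hb)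
  have hsplit0ρ : ∀ (f : ℝ → ℝ), Measurable f → (∀ x ∈ Icc (0:ℝ) 1, |f x| ≤ 1) →
      ∫ x in Icc 0 ρ, f x ∂μ
        = (∫ x in Icc 0 (ρ^2), f x ∂μ) + ∫ x in Ioc (ρ^2) ρ, f x ∂μ := by
    intro f hf hb
    rw [show Icc (0:ℝ) ρ = Icc 0 (ρ^2) ∪ Ioc (ρ^2) ρ from
      (Icc_union_Ioc_eq_Icc hρ2pos.le hρ2leρ).symm,
      hsplit f hf hb _ _ (hdisj _ _ _) measurableSet_Ioc]
  have hsum : ∀ (f : ℝ → ℝ), Measurable f → (∀ x ∈ Icc (0:ℝ) 1, |f x| ≤ 1) →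
      ∫ x in Icc (0:ℝ) 1, f x ∂μ
        = ((∫ x in Icc 0 (ρ^2), f x ∂μ) + ∫ x in Ioc (ρ^2) ρ, f x ∂μ)
          + ∫ x in Ioc ρ 1, f x ∂μ := by
    intro f hf hb
    rw [show Icc (0:ℝ) 1 = Icc 0 ρ ∪ Ioc ρ 1 from
      (Icc_union_Ioc_eq_Icc hρpos.le hρlt.le).symm,
      hsplit f hf hb _ _ (hdisj _ _ _) measurableSet_Ioc, hsplit0ρ f hf hb]
  -- expansion of integrands
  have expandS1' : ∀ s : Set ℝ, ∫ x in s, ρ * x ∂μ = ρ * ∫ x in s, x ∂μ :=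
    fun s => integral_const_mul _ _
  have expandS1 : ∀ s : Set ℝ, ∫ x in s, (ρ * x)^2 ∂μ = ρ^2 * ∫ x in s, x^2 ∂μ := by
    intro s
    simp_rw [mul_pow]
    exact integral_const_mul _ _
  have ix : ∀ s : Set ℝ, IntegrableOn (fun x : ℝ => x) s μ :=
    fun s => hint s _ measurable_id bx
  have ix2 : ∀ s : Set ℝ, IntegrableOn (fun x : ℝ => x^2) s μ :=
    fun s => hint s _ (measurable_id.pow_const 2) bx2
  have i0 : ∀ s : Set ℝ, IntegrableOn (fun _ : ℝ => (1:ℝ)) s μ :=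
    fun s => hint s _ measurable_const (fun x _ => by norm_num)
  have expand1 : ∀ s : Set ℝ, ∫ x in s, (ρ * x + (1 - ρ)) ∂μ
      = ρ * (∫ x in s, x ∂μ) + (1 - ρ) * (∫ x in s, (1:ℝ) ∂μ) := by
    intro s
    have h1 : Integrable (fun x : ℝ => ρ * x) (μ.restrict s) := (ix s).const_mul ρ
    have h2 : Integrable (fun x : ℝ => (1 - ρ) * 1) (μ.restrict s) := (i0 s).const_mul (1 - ρ)
    have e1 : ∫ x in s, (ρ * x + (1 - ρ) * 1) ∂μ
        = (∫ x in s, ρ * x ∂μ) + ∫ x in s, (1 - ρ) * 1 ∂μ := integral_add h1 h2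
    calc ∫ x in s, (ρ * x + (1 - ρ)) ∂μ
        = ∫ x in s, (ρ * x + (1 - ρ) * 1) ∂μ := by simp
      _ = (∫ x in s, ρ * x ∂μ) + ∫ x in s, (1 - ρ) * 1 ∂μ := e1
      _ = ρ * (∫ x in s, x ∂μ) + (1 - ρ) * (∫ x in s, (1:ℝ) ∂μ) := by
          rw [integral_const_mul, integral_const_mul]
  have expand2 : ∀ s : Set ℝ, ∫ x in s, (ρ * x + (1 - ρ))^2 ∂μ
      = ρ^2 * (∫ x in s, x^2 ∂μ) + 2*ρ*(1-ρ) * (∫ x in s, x ∂μ)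
        + (1-ρ)^2 * (∫ x in s, (1:ℝ) ∂μ) := by
    intro s
    have h1 : Integrable (fun x : ℝ => ρ^2 * x^2) (μ.restrict s) := (ix2 s).const_mul (ρ^2)
    have h2 : Integrable (fun x : ℝ => 2*ρ*(1-ρ) * x) (μ.restrict s) := (ix s).const_mul (2*ρ*(1-ρ))
    have h3 : Integrable (fun x : ℝ => (1-ρ)^2 * 1) (μ.restrict s) := (i0 s).const_mul ((1-ρ)^2)
    have e1 : ∫ x in s, (ρ^2 * x^2 + (2*ρ*(1-ρ) * x + (1-ρ)^2 * 1)) ∂μ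
        = (∫ x in s, ρ^2 * x^2 ∂μ) + ∫ x in s, (2*ρ*(1-ρ) * x + (1-ρ)^2 * 1) ∂μ :=
      integral_add h1 (h2.add h3)
    have e2 : ∫ x in s, (2*ρ*(1-ρ) * x + (1-ρ)^2 * 1) ∂μ
        = (∫ x in s, 2*ρ*(1-ρ) * x ∂μ) + ∫ x in s, (1-ρ)^2 * 1 ∂μ := integral_add h2 h3
    calc ∫ x in s, (ρ * x + (1 - ρ))^2 ∂μ
        = ∫ x in s, (ρ^2 * x^2 + (2*ρ*(1-ρ) * x + (1-ρ)^2 * 1)) ∂μ :=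
          integral_congr_ae (ae_of_all _ fun x => by ring)
      _ = (∫ x in s, ρ^2 * x^2 ∂μ) + ((∫ x in s, 2*ρ*(1-ρ) * x ∂μ) + ∫ x in s, (1-ρ)^2 * 1 ∂μ) := by
          rw [e1, e2]
      _ = ρ^2 * (∫ x in s, x^2 ∂μ) + 2*ρ*(1-ρ) * (∫ x in s, x ∂μ)
            + (1-ρ)^2 * (∫ x in s, (1:ℝ) ∂μ) := by
          rw [integral_const_mul, integral_const_mul, integral_const_mul]; ring
  -- total mass of [0,1]
  have hI1 : ∫ x in Icc (0:ℝ) 1, (1:ℝ) ∂μ = 1 := by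
    rw [setIntegral_const]
    have hμ1 : μ (Icc (0:ℝ) 1) = 1 := by
      have hh := measure_add_measure_compl (μ := μ) (measurableSet_Icc (a := (0:ℝ)) (b := 1))
      rw [hsupp, add_zero] at hh
      rw [hh]; exact measure_univ
    rw [measureReal_def, hμ1]; simp
  -- moment equations, k = 0
  have hs0 := hsum (fun _ => (1:ℝ)) measurable_const (fun x _ => by norm_num)
  have q0a : (∫ x in Icc 0 (ρ^2), (1:ℝ) ∂μ)
      = 1/2 * ((∫ x in Icc 0 (ρ^2), (1:ℝ) ∂μ) + ∫ x in Ioc (ρ^2) ρ, (1:ℝ) ∂μ) := by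
    have e := key (Icc 0 (ρ^2)) (fun _ => (1:ℝ)) measurableSet_Icc measurable_const
      (fun x _ => by norm_num)
    have hs := hsplit0ρ (fun _ => (1:ℝ)) measurable_const (fun x _ => by norm_num)
    rw [pre1A, pre2A, intnull _ _ hIccneg, hs] at e
    linear_combination e
  have q0b : (∫ x in Ioc (ρ^2) ρ, (1:ℝ) ∂μ)
      = 1/2 * (∫ x in Ioc ρ 1, (1:ℝ) ∂μ) + 1/2 * (∫ x in Icc 0 (ρ^2), (1:ℝ) ∂μ) := by
    have e := key (Ioc (ρ^2) ρ) (fun _ => (1:ℝ)) measurableSet_Ioc measurable_const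
      (fun x _ => by norm_num)
    rw [pre1B, pre2B, setIntegral_congr_set hAeq] at e
    linear_combination e
  -- moment equations, k = 1
  have hs1 := hsum (fun x => x) measurable_id bx
  have qm1 : (∫ x in Icc (0:ℝ) 1, x ∂μ)
      = 1/2 * (ρ * ∫ x in Icc (0:ℝ) 1, x ∂μ)
      + 1/2 * (ρ * (∫ x in Icc (0:ℝ) 1, x ∂μ) + (1-ρ) * 1) := by
    have e := key (Icc 0 1) (fun x => x) measurableSet_Icc measurable_id bx
    rw [pre1I, pre2I, setIntegral_congr_set hIeq1, setIntegral_congr_set hIeq2,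
        expandS1', expand1, hI1] at e
    linear_combination e
  have q1a : (∫ x in Icc 0 (ρ^2), x ∂μ)
      = 1/2 * (ρ * ((∫ x in Icc 0 (ρ^2), x ∂μ) + ∫ x in Ioc (ρ^2) ρ, x ∂μ)) := by
    have e := key (Icc 0 (ρ^2)) (fun x => x) measurableSet_Icc measurable_id
      (fun x hx => bx x (hAsub hx))
    have hs := hsplit0ρ (fun x => x) measurable_id bx
    rw [pre1A, pre2A, intnull _ _ hIccneg, expandS1', hs] at e
    linear_combination e
  have q1b : (∫ x in Ioc (ρ^2) ρ, x ∂μ)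
      = 1/2 * (ρ * ∫ x in Ioc ρ 1, x ∂μ)
      + 1/2 * (ρ * (∫ x in Icc 0 (ρ^2), x ∂μ)
          + (1-ρ) * ∫ x in Icc 0 (ρ^2), (1:ℝ) ∂μ) := by
    have e := key (Ioc (ρ^2) ρ) (fun x => x) measurableSet_Ioc measurable_id
      (fun x hx => bx x (hBsub hx))
    rw [pre1B, pre2B, setIntegral_congr_set hAeq, expandS1', expand1] at e
    linear_combination e
  -- moment equations, k = 2
  have hs2 := hsum (fun x => x^2) (measurable_id.pow_const 2) bx2
  have qm2 : (∫ x in Icc (0:ℝ) 1, x^2 ∂μ)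
      = 1/2 * (ρ^2 * ∫ x in Icc (0:ℝ) 1, x^2 ∂μ)
      + 1/2 * (ρ^2 * (∫ x in Icc (0:ℝ) 1, x^2 ∂μ)
          + 2*ρ*(1-ρ) * (∫ x in Icc (0:ℝ) 1, x ∂μ) + (1-ρ)^2 * 1) := by
    have e := key (Icc 0 1) (fun x => x^2) measurableSet_Icc (measurable_id.pow_const 2) bx2
    rw [pre1I, pre2I, setIntegral_congr_set hIeq1, setIntegral_congr_set hIeq2,
        expandS1, expand2, hI1] at e
    linear_combination e
  have q2a : (∫ x in Icc 0 (ρ^2), x^2 ∂μ)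
      = 1/2 * (ρ^2 * ((∫ x in Icc 0 (ρ^2), x^2 ∂μ) + ∫ x in Ioc (ρ^2) ρ, x^2 ∂μ)) := by
    have e := key (Icc 0 (ρ^2)) (fun x => x^2) measurableSet_Icc (measurable_id.pow_const 2)
      (fun x hx => bx2 x (hAsub hx))
    have hs := hsplit0ρ (fun x => x^2) (measurable_id.pow_const 2) bx2
    rw [pre1A, pre2A, intnull _ _ hIccneg, expandS1, hs] at e
    linear_combination e
  have q2b : (∫ x in Ioc (ρ^2) ρ, x^2 ∂μ)
      = 1/2 * (ρ^2 * ∫ x in Ioc ρ 1, x^2 ∂μ)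
      + 1/2 * (ρ^2 * (∫ x in Icc 0 (ρ^2), x^2 ∂μ)
          + 2*ρ*(1-ρ) * (∫ x in Icc 0 (ρ^2), x ∂μ)
          + (1-ρ)^2 * ∫ x in Icc 0 (ρ^2), (1:ℝ) ∂μ) := by
    have e := key (Ioc (ρ^2) ρ) (fun x => x^2) measurableSet_Ioc (measurable_id.pow_const 2)
      (fun x hx => bx2 x (hBsub hx))
    rw [pre1B, pre2B, setIntegral_congr_set hAeq, expandS1, expand2] at e
    linear_combination e
  -- solve the linear system
  set rA := ∫ x in Icc 0 (ρ^2), (1:ℝ) ∂μ with hrAdef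
  set rB := ∫ x in Ioc (ρ^2) ρ, (1:ℝ) ∂μ with hrBdef
  set rC := ∫ x in Ioc ρ 1, (1:ℝ) ∂μ with hrCdef
  set a1 := ∫ x in Icc 0 (ρ^2), x ∂μ with ha1def
  set b1 := ∫ x in Ioc (ρ^2) ρ, x ∂μ with hb1def
  set c1 := ∫ x in Ioc ρ 1, x ∂μ with hc1def
  set m1 := ∫ x in Icc (0:ℝ) 1, x ∂μ with hm1def
  set a2 := ∫ x in Icc 0 (ρ^2), x^2 ∂μ with ha2def
  set b2 := ∫ x in Ioc (ρ^2) ρ, x^2 ∂μ with hb2def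
  set c2 := ∫ x in Ioc ρ 1, x^2 ∂μ with hc2def
  set m2 := ∫ x in Icc (0:ℝ) 1, x^2 ∂μ with hm2def
  rw [hI1] at hs0
  have h1mρ : (1:ℝ) - ρ ≠ 0 := ne_of_gt (by linarith)
  have h2pρ : (2:ℝ) + ρ ≠ 0 := ne_of_gt (by linarith)
  have hrAv : rA = 1/3 := by linarith [q0a, q0b, hs0]
  have hm1v : m1 = 1/2 := by
    have h : (1-ρ) * m1 = (1-ρ) * (1/2) := by linear_combination qm1
    exact mul_left_cancel₀ h1mρ h
  have hb1v : b1 = 1/6 := by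
    have h : (2+ρ) * b1 = (2+ρ) * (1/6) := by
      linear_combination 2*q1b - ρ*hs1 + (1-ρ)*hrAv + ρ*hm1v
    exact mul_left_cancel₀ h2pρ h
  have ha1 : (2-ρ) * a1 = ρ/6 := by linear_combination 2*q1a + ρ*hb1v
  have hm2v : m2 = ρ/2 := by
    have h : ρ * m2 = ρ * (ρ/2) := by
      linear_combination qm2 + m2*hρ2 + ρ*(1-ρ)*hm1v - (1/2)*hρ2
    exact mul_left_cancel₀ hρne h
  have hb2 : 6*(2-ρ)*(2+ρ^2) * b2
      = 3*ρ^3*(2-ρ) + 2*ρ^2*(1-ρ) + 2*(1-ρ)^2*(2-ρ) := by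
    linear_combination (12*(2-ρ))*q2b - (6*ρ^2*(2-ρ))*hs2 + (6*(2-ρ)*(1-ρ)^2)*hrAv
      + (6*ρ^2*(2-ρ))*hm2v + (12*ρ*(1-ρ))*ha1
  have hfin : (6*(2-ρ)*(2+ρ^2)) * (2-ρ^2) * a2
      = ρ^2 * (3*ρ^3*(2-ρ) + 2*ρ^2*(1-ρ) + 2*(1-ρ)^2*(2-ρ)) := by
    linear_combination (2*(6*(2-ρ)*(2+ρ^2)))*q2a + ρ^2*hb2
  have hden : (6:ℝ)*(ρ+8) ≠ 0 := ne_of_gt (by linarith)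
  have hbig : (6*(2-ρ)*(2+ρ^2)) * (2-ρ^2) ≠ 0 := by
    have : (0:ℝ) < (6*(2-ρ)*(2+ρ^2)) * (2-ρ^2) := by
      have h1 : (0:ℝ) < 2-ρ := by linarith
      have h2 : (0:ℝ) < 2+ρ^2 := by positivity
      have h3 : (0:ℝ) < 2-ρ^2 := by linarith [hρ2lt1]
      positivity
    exact ne_of_gt this
  rw [eq_div_iff hden]
  have hkey : ((6*(2-ρ)*(2+ρ^2)) * (2-ρ^2)) * (a2 * (6*(ρ+8)))
      = ((6*(2-ρ)*(2+ρ^2)) * (2-ρ^2)) * (ρ^4*(5*ρ+4)) := by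
    linear_combination (6*(ρ+8))*hfin
      + (-192*ρ^2 + 264*ρ^3 - 156*ρ^4 + 96*ρ^5 - 48*ρ^6 + 66*ρ^7 - 30*ρ^8)*hρ2
  exact mul_left_cancel₀ hbig hkey
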